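/- arXiv:1612.08393 — 2 statements merged into one kernel-verified Lean document; each statement's English description precedes it below -/
import Mathlib

section
/- Weak* convergence of periodic-window indicator functions to a constant: Fix S < T and λ ∈ [0,1]. For each positive integer n define A_{n,λ} := ⋃_{k=0}^{n−1} [S + k(T−S)/n, S + (k+λ)(T−S)/n]. Then for every Lebesgue-integrable function g : [S,T] → ℝ, ∫_{A_{n,λ}} g(t) dt → λ · ∫_S^T g(t) dt as n → ∞. -/
open MeasureTheory Set Filter

set_option maxHeartbeats 1000000 in
lemma key_cont (S T : ℝ) (hST : S < T) (lam : ℝ) (hlam : lam ∈ Set.Icc (0 : ℝ) 1)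
    (f : ℝ → ℝ) (hf : Continuous f) :
    Tendsto
      (fun n : ℕ => ∫ t in (⋃ k ∈ Finset.range n,
        Set.Icc (S + (k : ℝ) * (T - S) / (n : ℝ)) (S + ((k : ℝ) + lam) * (T - S) / (n : ℝ))), f t)
      atTop (nhds (lam * ∫ t in Set.Icc S T, f t)) := by
  obtain ⟨hl0, hl1⟩ := hlam
  have hTS : (0:ℝ) < T - S := sub_pos.2 hST
  rw [Metric.tendsto_atTop]
  intro ε hε
  set ε' : ℝ := ε / (2 * (T - S) + 1) with hε'def
  have hε' : 0 < ε' := div_pos hε (by linarith)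
  obtain ⟨δ, hδ, hδf⟩ := Metric.uniformContinuousOn_iff.1
    ((isCompact_Icc (a := S) (b := T)).uniformContinuousOn_of_continuous hf.continuousOn) ε' hε'
  obtain ⟨N, hN⟩ := exists_nat_gt ((T - S) / δ)
  refine ⟨N + 1, fun n hn => ?_⟩
  have hn1 : 1 ≤ n := le_trans (Nat.le_add_left 1 N) hn
  have hnpos : (0:ℝ) < (n:ℝ) := by exact_mod_cast hn1
  set h : ℝ := (T - S) / n with hh
  have hhpos : 0 < h := div_pos hTS hnpos
  have hNn : (N:ℝ) ≤ (n:ℝ) := by exact_mod_cast le_trans (Nat.le_succ N) hn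
  have hhδ : h < δ := by
    rw [hh, div_lt_iff₀ hnpos]
    rw [div_lt_iff₀ hδ] at hN
    nlinarith
  set a : ℕ → ℝ := fun k => S + k * h with ha
  have hamono : ∀ j k : ℕ, j ≤ k → a j ≤ a k := by
    intro j k hjk
    have : (j:ℝ) ≤ k := by exact_mod_cast hjk
    simp only [ha]
    nlinarith
  have ha0 : a 0 = S := by simp [ha]
  have han : a n = T := by
    simp only [ha, hh]
    field_simp
    ring
  have hak : ∀ k : ℕ, k < n → a k ∈ Set.Icc S T ∧ a k + lam * h ≤ a (k+1) := by
    intro k hk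
    refine ⟨⟨?_, han ▸ hamono k n hk.le⟩, ?_⟩
    · have hk0 : (0:ℝ) ≤ (k:ℝ) := Nat.cast_nonneg k
      simp only [ha]
      nlinarith
    have : lam * h ≤ 1 * h := by nlinarith
    simp only [ha]
    push_cast
    nlinarith
  -- endpoints match
  have hend1 : ∀ k : ℕ, S + (k : ℝ) * (T - S) / (n : ℝ) = a k := by
    intro k; simp only [ha, hh]; ring
  have hend2 : ∀ k : ℕ, S + ((k : ℝ) + lam) * (T - S) / (n : ℝ) = a k + lam * h := by
    intro k; simp only [ha, hh]; ring
  -- Step A : integral over the union is a sum of interval integrals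
  have hA : (∫ t in (⋃ k ∈ Finset.range n,
        Set.Icc (S + (k : ℝ) * (T - S) / (n : ℝ)) (S + ((k : ℝ) + lam) * (T - S) / (n : ℝ))), f t)
      = ∑ k ∈ Finset.range n, ∫ t in (a k)..(a k + lam * h), f t := by
    have hseteq : (⋃ k ∈ Finset.range n,
        Set.Icc (S + (k : ℝ) * (T - S) / (n : ℝ)) (S + ((k : ℝ) + lam) * (T - S) / (n : ℝ)))
        = ⋃ k ∈ Finset.range n, Set.Icc (a k) (a k + lam * h) := by
      refine Set.iUnion₂_congr fun k _ => ?_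
      rw [hend1 k, hend2 k]
    rw [hseteq]
    have hae : (⋃ k ∈ (Finset.range n : Finset ℕ), Set.Icc (a k) (a k + lam * h))
        =ᵐ[volume] ⋃ k ∈ (Finset.range n : Finset ℕ), Set.Ico (a k) (a k + lam * h) := by
      exact EventuallyEq.countable_bUnion (Finset.range n).countable_toSet
        fun k _ => Ico_ae_eq_Icc.symm
    rw [setIntegral_congr_set hae]
    rw [integral_biUnion_finset (Finset.range n) (fun k _ => measurableSet_Ico) ?_ ?_]
    · refine Finset.sum_congr rfl fun k hk => ?_
      have hle : a k ≤ a k + lam * h := by nlinarith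
      rw [← integral_Icc_eq_integral_Ico, integral_Icc_eq_integral_Ioc,
        intervalIntegral.integral_of_le hle]
    · intro i hi j hj hij
      rcases Ne.lt_or_gt hij with hlt | hlt
      · rw [Function.onFun, Set.Ico_disjoint_Ico]
        have h1 : a i + lam * h ≤ a j := by
          calc a i + lam * h ≤ a (i+1) := (hak i (Finset.mem_range.1 hi)).2
            _ ≤ a j := hamono _ _ hlt
        exact min_le_of_left_le (le_max_of_le_right h1)
      · rw [Function.onFun, Set.Ico_disjoint_Ico]
        have h1 : a j + lam * h ≤ a i := by
          calc a j + lam * h ≤ a (j+1) := (hak j (Finset.mem_range.1 hj)).2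
            _ ≤ a i := hamono _ _ hlt
        exact min_le_of_right_le (le_max_of_le_left h1)
    · intro k _
      exact (hf.integrableOn_Icc).mono_set Set.Ico_subset_Icc_self
  -- Step B : the limit is the corresponding Riemann-type sum
  have hB : lam * ∫ t in Set.Icc S T, f t
      = ∑ k ∈ Finset.range n, lam * ∫ t in (a k)..(a (k+1)), f t := by
    rw [← Finset.mul_sum]
    congr 1
    rw [intervalIntegral.sum_integral_adjacent_intervals
      (fun k _ => hf.intervalIntegrable _ _), ha0, han,
      integral_Icc_eq_integral_Ioc, intervalIntegral.integral_of_le hST.le]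
  rw [Real.dist_eq, hA, hB, ← Finset.sum_sub_distrib]
  -- per-term estimate
  have hterm : ∀ k ∈ Finset.range n,
      |(∫ t in (a k)..(a k + lam * h), f t) - lam * ∫ t in (a k)..(a (k+1)), f t|
        ≤ 2 * ε' * h := by
    intro k hk
    have hkn := Finset.mem_range.1 hk
    obtain ⟨hakmem, hup⟩ := hak k hkn
    have hk1T : a (k+1) ≤ T := han ▸ hamono (k+1) n hkn
    have hstep : a (k+1) = a k + h := by simp only [ha]; push_cast; ring
    set c : ℝ := f (a k) with hc
    have hfc : ∀ x ∈ Set.Icc (a k) (a (k+1)), ‖f x - c‖ ≤ ε' := by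
      intro x hx
      have hxmem : x ∈ Set.Icc S T := ⟨le_trans hakmem.1 hx.1, le_trans hx.2 hk1T⟩
      have hdist : dist x (a k) < δ := by
        rw [Real.dist_eq, abs_of_nonneg (by linarith [hx.1])]
        have : x - a k ≤ h := by rw [hstep] at hx; linarith [hx.2]
        linarith
      exact (le_of_lt (hδf x hxmem (a k) hakmem hdist))
    have hle1 : a k ≤ a k + lam * h := by nlinarith
    have hle2 : a k ≤ a (k+1) := by rw [hstep]; linarith
    have hsub : a k + lam * h ≤ a (k+1) := hup
    have e1 : (∫ t in (a k)..(a k + lam * h), f t)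
        = (∫ t in (a k)..(a k + lam * h), (f t - c)) + lam * h * c := by
      rw [intervalIntegral.integral_sub (hf.intervalIntegrable _ _)
        (intervalIntegrable_const)]
      rw [intervalIntegral.integral_const]
      simp only [smul_eq_mul]
      ring
    have e2 : (∫ t in (a k)..(a (k+1)), f t)
        = (∫ t in (a k)..(a (k+1)), (f t - c)) + h * c := by
      rw [intervalIntegral.integral_sub (hf.intervalIntegrable _ _)
        (intervalIntegrable_const)]
      rw [intervalIntegral.integral_const]
      rw [hstep]
      simp only [smul_eq_mul]
      ring
    have hb1' : ∀ x ∈ Set.uIoc (a k) (a k + lam * h), ‖f x - c‖ ≤ ε' := by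
      intro x hx
      rw [Set.uIoc_of_le hle1] at hx
      exact hfc x ⟨hx.1.le, le_trans hx.2 hsub⟩
    have b1 : |∫ t in (a k)..(a k + lam * h), (f t - c)| ≤ ε' * (lam * h) := by
      have hb := intervalIntegral.norm_integral_le_of_norm_le_const hb1'
      rw [Real.norm_eq_abs, add_sub_cancel_left, abs_of_nonneg (mul_nonneg hl0 hhpos.le)] at hb
      exact hb
    have hb2' : ∀ x ∈ Set.uIoc (a k) (a (k+1)), ‖f x - c‖ ≤ ε' := by
      intro x hx
      rw [Set.uIoc_of_le hle2] at hx
      exact hfc x ⟨hx.1.le, hx.2⟩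
    have b2 : |∫ t in (a k)..(a (k+1)), (f t - c)| ≤ ε' * h := by
      have hb := intervalIntegral.norm_integral_le_of_norm_le_const hb2'
      rw [Real.norm_eq_abs] at hb
      have habs : |a (k+1) - a k| = h := by
        rw [hstep, add_sub_cancel_left, abs_of_nonneg hhpos.le]
      rw [habs] at hb
      exact hb
    rw [e1, e2]
    have : (∫ t in (a k)..(a k + lam * h), (f t - c)) + lam * h * c
        - lam * ((∫ t in (a k)..(a (k+1)), (f t - c)) + h * c)
        = (∫ t in (a k)..(a k + lam * h), (f t - c))
          - lam * (∫ t in (a k)..(a (k+1)), (f t - c)) := by ring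
    rw [this]
    calc |(∫ t in (a k)..(a k + lam * h), (f t - c))
          - lam * (∫ t in (a k)..(a (k+1)), (f t - c))|
        ≤ |∫ t in (a k)..(a k + lam * h), (f t - c)|
          + lam * |∫ t in (a k)..(a (k+1)), (f t - c)| := by
          have h3 := abs_sub (∫ t in (a k)..(a k + lam * h), (f t - c))
            (lam * ∫ t in (a k)..(a (k+1)), (f t - c))
          rwa [abs_mul, abs_of_nonneg hl0] at h3
      _ ≤ ε' * (lam * h) + lam * (ε' * h) := by
          exact add_le_add b1 (mul_le_mul_of_nonneg_left b2 hl0)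
      _ ≤ 2 * ε' * h := by nlinarith
  calc |∑ k ∈ Finset.range n, ((∫ t in (a k)..(a k + lam * h), f t)
          - lam * ∫ t in (a k)..(a (k+1)), f t)|
      ≤ ∑ k ∈ Finset.range n, |(∫ t in (a k)..(a k + lam * h), f t)
          - lam * ∫ t in (a k)..(a (k+1)), f t| := Finset.abs_sum_le_sum_abs _ _
    _ ≤ ∑ _k ∈ Finset.range n, 2 * ε' * h := Finset.sum_le_sum hterm
    _ = 2 * ε' * (T - S) := by
        rw [Finset.sum_const, Finset.card_range, nsmul_eq_mul, hh]
        field_simp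
    _ < ε := by
        have hD : (0:ℝ) < 2 * (T - S) + 1 := by linarith
        have hcanc : ε' * (2 * (T - S) + 1) = ε := by
          rw [hε'def]; field_simp
        nlinarith [hε', hTS]

/-- Weak* convergence of periodic-window indicator functions to a constant:
for `A_{n,λ} = ⋃_{k=0}^{n-1} [S + k(T-S)/n, S + (k+λ)(T-S)/n]` and any integrable `g` on
`[S,T]`, `∫_{A_{n,λ}} g → λ ∫_S^T g` as `n → ∞`. -/
theorem stmt3 (S T : ℝ) (hST : S < T) (lam : ℝ) (hlam : lam ∈ Set.Icc (0 : ℝ) 1)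
    (g : ℝ → ℝ) (hg : IntegrableOn g (Set.Icc S T) volume) :
    Tendsto
      (fun n : ℕ => ∫ t in (⋃ k ∈ Finset.range n,
        Set.Icc (S + (k : ℝ) * (T - S) / (n : ℝ)) (S + ((k : ℝ) + lam) * (T - S) / (n : ℝ))), g t)
      atTop (nhds (lam * ∫ t in Set.Icc S T, g t)) := by
  obtain ⟨hl0, hl1⟩ := hlam
  have hTS : (0:ℝ) < T - S := sub_pos.2 hST
  rw [Metric.tendsto_atTop]
  intro ε hε
  set g' : ℝ → ℝ := (Set.Icc S T).indicator g with hg'def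
  have hg'int : Integrable g' volume := hg.integrable_indicator measurableSet_Icc
  obtain ⟨f, hfsupp, hfapprox, hfcont, hfint⟩ :=
    hg'int.exists_hasCompactSupport_integral_sub_le (by positivity : (0:ℝ) < ε/4)
  have hkey := key_cont S T hST lam ⟨hl0, hl1⟩ f hfcont
  rw [Metric.tendsto_atTop] at hkey
  obtain ⟨N, hN⟩ := hkey (ε/4) (by positivity)
  refine ⟨N, fun n hn => ?_⟩
  have hN' := hN n hn
  set A := ⋃ k ∈ Finset.range n, Set.Icc (S + (k : ℝ) * (T - S) / (n : ℝ))
      (S + ((k : ℝ) + lam) * (T - S) / (n : ℝ)) with hA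
  have hAmeas : MeasurableSet A := Finset.measurableSet_biUnion _ fun k _ => measurableSet_Icc
  have hAsub : A ⊆ Set.Icc S T := by
    intro x hx
    simp only [hA, Set.mem_iUnion, Finset.mem_range] at hx
    obtain ⟨k, hk, hx1, hx2⟩ := hx
    have hn0 : (0:ℝ) < (n:ℝ) := by
      have : 0 < n := lt_of_le_of_lt (Nat.zero_le k) hk
      exact_mod_cast this
    have hkn : (k:ℝ) + 1 ≤ (n:ℝ) := by exact_mod_cast hk
    have hd1 : (0:ℝ) ≤ (k:ℝ) * (T - S) / (n:ℝ) := by positivity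
    have hd2 : ((k:ℝ) + lam) * (T - S) / (n:ℝ) ≤ T - S := by
      rw [div_le_iff₀ hn0]
      nlinarith
    exact ⟨by linarith, by linarith⟩
  -- replace g by g' on A and on Icc
  have hEq1 : ∫ t in A, g t = ∫ t in A, g' t :=
    setIntegral_congr_fun hAmeas fun x hx => (Set.indicator_of_mem (hAsub hx) g).symm
  have hEq2 : ∫ t in Set.Icc S T, g t = ∫ t in Set.Icc S T, g' t :=
    setIntegral_congr_fun measurableSet_Icc fun x hx => (Set.indicator_of_mem hx g).symm
  have hsubint : Integrable (fun x => g' x - f x) volume := hg'int.sub hfint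
  have hnorm_int : Integrable (fun x => ‖g' x - f x‖) volume := hsubint.norm
  -- piece 1
  have hp1 : dist (∫ t in A, g t) (∫ t in A, f t) ≤ ε / 4 := by
    rw [hEq1, Real.dist_eq, ← integral_sub hg'int.integrableOn hfint.integrableOn]
    calc |∫ t in A, (g' t - f t)| ≤ ∫ t in A, ‖g' t - f t‖ := by
          rw [← Real.norm_eq_abs]; exact norm_integral_le_integral_norm _
      _ ≤ ∫ t, ‖g' t - f t‖ :=
          setIntegral_le_integral hnorm_int (Filter.Eventually.of_forall fun x => norm_nonneg _)
      _ ≤ ε / 4 := hfapprox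
  -- piece 3
  have hp3 : dist (lam * ∫ t in Set.Icc S T, f t) (lam * ∫ t in Set.Icc S T, g t) ≤ ε / 4 := by
    rw [hEq2, Real.dist_eq, ← mul_sub, abs_mul, abs_of_nonneg hl0,
      ← integral_sub hfint.integrableOn hg'int.integrableOn]
    have hb : |∫ t in Set.Icc S T, (f t - g' t)| ≤ ε / 4 := by
      calc |∫ t in Set.Icc S T, (f t - g' t)| ≤ ∫ t in Set.Icc S T, ‖f t - g' t‖ := by
            rw [← Real.norm_eq_abs]; exact norm_integral_le_integral_norm _
        _ = ∫ t in Set.Icc S T, ‖g' t - f t‖ := by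
            simp only [norm_sub_rev]
        _ ≤ ∫ t, ‖g' t - f t‖ :=
            setIntegral_le_integral hnorm_int (Filter.Eventually.of_forall fun x => norm_nonneg _)
        _ ≤ ε / 4 := hfapprox
    nlinarith [abs_nonneg (∫ t in Set.Icc S T, (f t - g' t))]
  calc dist (∫ t in A, g t) (lam * ∫ t in Set.Icc S T, g t)
      ≤ dist (∫ t in A, g t) (∫ t in A, f t)
        + dist (∫ t in A, f t) (lam * ∫ t in Set.Icc S T, f t)
        + dist (lam * ∫ t in Set.Icc S T, f t) (lam * ∫ t in Set.Icc S T, g t) :=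
        dist_triangle4 _ _ _ _
    _ < ε / 4 + ε / 4 + ε / 4 :=
        add_lt_add_of_lt_of_le (add_lt_add_of_le_of_lt hp1 hN') hp3
    _ < ε := by linarith
end

section
/- Completeness of the space of measurable selectors under the 'measure of disagreement' metric: Let U : [a,b] ⇝ ℝ^m be a multifunction whose graph {(t,u) : u ∈ U(t)} is ℒ × ℬ measurable, and let (u_n) be a sequence of measurable selectors of U (i.e. u_n is Lebesgue measurable and u_n(t) ∈ U(t) a.e.) that is Cauchy with respect to d(u,v) := meas{ t ∈ [a,b] : u(t) ≠ v(t) }. Then there exists a measurable selector u of U such that d(u_n, u) → 0 as n → ∞. -/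
open MeasureTheory Set Filter
open scoped ENNReal

noncomputable section

/-- The Lebesgue σ-algebra on `ℝ`: the Carathéodory σ-algebra of Lebesgue outer measure. -/
def Leb : MeasurableSpace ℝ := (volume : Measure ℝ).toOuterMeasure.caratheodory

/-- The product σ-algebra ℒ × ℬ of the Lebesgue sets of `ℝ` with the Borel sets of `β`. -/
def LebProd (β : Type*) [MeasurableSpace β] : MeasurableSpace (ℝ × β) :=
  Leb.prod inferInstance

/-- Completeness of the space of measurable selectors of a multifunction with ℒ × ℬ
measurable graph, under the "measure of disagreement" metric
`d(u,v) = meas {t ∈ [a,b] : u t ≠ v t}`. -/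
theorem stmt5 (a b : ℝ) (hab : a ≤ b) (m : ℕ)
    (U : ℝ → Set (EuclideanSpace ℝ (Fin m)))
    (hGraph : MeasurableSet[LebProd (EuclideanSpace ℝ (Fin m))]
      {p : ℝ × EuclideanSpace ℝ (Fin m) | p.1 ∈ Icc a b ∧ p.2 ∈ U p.1})
    (u : ℕ → ℝ → EuclideanSpace ℝ (Fin m))
    (hmeas : ∀ n, AEMeasurable (u n) (volume.restrict (Icc a b)))
    (hsel : ∀ n, ∀ᵐ t ∂volume.restrict (Icc a b), u n t ∈ U t)
    (hCauchy : ∀ ε : ℝ≥0∞, 0 < ε → ∃ N : ℕ, ∀ p q : ℕ, N ≤ p → N ≤ q →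
      volume {t ∈ Icc a b | u p t ≠ u q t} < ε) :
    ∃ v : ℝ → EuclideanSpace ℝ (Fin m),
      AEMeasurable v (volume.restrict (Icc a b)) ∧
      (∀ᵐ t ∂volume.restrict (Icc a b), v t ∈ U t) ∧
      Tendsto (fun n => volume {t ∈ Icc a b | u n t ≠ v t}) atTop (nhds 0) := by
  classical
  set μ := volume.restrict (Icc a b) with hμdef
  -- rewrite the disagreement sets in terms of the restricted measure
  have hset : ∀ f g : ℝ → EuclideanSpace ℝ (Fin m),
      volume {t ∈ Icc a b | f t ≠ g t} = μ {t | f t ≠ g t} := by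
    intro f g
    rw [hμdef, Measure.restrict_apply' measurableSet_Icc]
    congr 1
    ext t
    simp [and_comm]
  have hC : ∀ ε : ℝ≥0∞, 0 < ε → ∃ N : ℕ, ∀ p q : ℕ, N ≤ p → N ≤ q →
      μ {t | u p t ≠ u q t} < ε := by
    intro ε hε
    obtain ⟨N, hN⟩ := hCauchy ε hε
    exact ⟨N, fun p q hp hq => by rw [← hset]; exact hN p q hp hq⟩
  have hpow : ∀ k : ℕ, (0 : ℝ≥0∞) < 2⁻¹ ^ k := fun k => ENNReal.pow_pos (by norm_num) k
  choose N hN using fun k => hC (2⁻¹ ^ k) (hpow k)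
  -- a strictly increasing sequence of indices
  let n : ℕ → ℕ := fun k => Nat.rec (N 0) (fun k nk => max (nk + 1) (N (k + 1))) k
  have hn_succ : ∀ k, n (k + 1) = max (n k + 1) (N (k + 1)) := fun _ => rfl
  have hn_strict : StrictMono n := by
    apply strictMono_nat_of_lt_succ
    intro k
    rw [hn_succ]
    exact lt_of_lt_of_le (Nat.lt_succ_self _) (le_max_left _ _)
  have hn_N : ∀ k, N k ≤ n k := by
    intro k
    cases k with
    | zero => exact le_refl _
    | succ k => rw [hn_succ]; exact le_max_right _ _
  -- the sets of disagreement of consecutive members of the subsequence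
  set E : ℕ → Set ℝ := fun k => {t | u (n k) t ≠ u (n (k + 1)) t} with hEdef
  have hE : ∀ k, μ (E k) < 2⁻¹ ^ k := by
    intro k
    exact hN k (n k) (n (k + 1)) (hn_N k) (le_trans (hn_N k) (hn_strict (Nat.lt_succ_self k)).le)
  set F : ℕ → Set ℝ := fun k => ⋃ j, E (k + j) with hFdef
  have hF : ∀ k, μ (F k) ≤ 2⁻¹ ^ k * 2 := by
    intro k
    calc μ (F k) ≤ ∑' j, μ (E (k + j)) := measure_iUnion_le _
      _ ≤ ∑' j : ℕ, 2⁻¹ ^ (k + j) := ENNReal.tsum_le_tsum fun j => (hE (k + j)).le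
      _ = 2⁻¹ ^ k * ∑' j : ℕ, 2⁻¹ ^ j := by
          rw [← ENNReal.tsum_mul_left]
          exact tsum_congr fun j => pow_add _ _ _
      _ = 2⁻¹ ^ k * 2 := by
          rw [ENNReal.tsum_geometric]
          norm_num
  -- outside `F k`, the subsequence is constant from index `k` on
  have hconst : ∀ k t, t ∉ F k → ∀ i, k ≤ i → u (n i) t = u (n k) t := by
    intro k t ht
    have ht' : ∀ j, u (n (k + j)) t = u (n (k + j + 1)) t := by
      intro j
      by_contra h
      exact ht (mem_iUnion.2 ⟨j, h⟩)
    intro i hi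
    induction i, hi using Nat.le_induction with
    | base => rfl
    | succ i hi ih =>
        have := ht' (i - k)
        rw [Nat.add_sub_cancel' hi] at this
        rw [← this]
        exact ih
  -- the candidate limit
  set v : ℝ → EuclideanSpace ℝ (Fin m) :=
    fun t => limUnder atTop (fun i => u (n i) t) with hvdef
  have htendsto : ∀ k t, t ∉ F k →
      Tendsto (fun i => u (n i) t) atTop (nhds (u (n k) t)) := by
    intro k t ht
    apply Tendsto.congr' _ (tendsto_const_nhds (x := u (n k) t))
    filter_upwards [eventually_ge_atTop k] with i hi
    exact (hconst k t ht i hi).symm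
  have hvk : ∀ k t, t ∉ F k → v t = u (n k) t := fun k t ht =>
    (htendsto k t ht).limUnder_eq
  have hvtendsto : ∀ k t, t ∉ F k →
      Tendsto (fun i => u (n i) t) atTop (nhds (v t)) := by
    intro k t ht
    rw [hvk k t ht]
    exact htendsto k t ht
  -- the bad set has measure zero
  have hA : ∀ᵐ t ∂μ, t ∉ ⋂ k, F k := by
    rw [← measure_eq_zero_iff_ae_notMem]
    have hle : ∀ k, μ (⋂ k, F k) ≤ 2⁻¹ ^ k * 2 := fun k =>
      le_trans (measure_mono (iInter_subset _ k)) (hF k)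
    have htend0 : Tendsto (fun k : ℕ => (2⁻¹ : ℝ≥0∞) ^ k * 2) atTop (nhds 0) := by
      have h1 : Tendsto (fun k : ℕ => (2⁻¹ : ℝ≥0∞) ^ k) atTop (nhds 0) :=
        ENNReal.tendsto_pow_atTop_nhds_zero_of_lt_one (by norm_num)
      have := ENNReal.Tendsto.mul_const h1 (Or.inr (by norm_num : (2 : ℝ≥0∞) ≠ ⊤))
      simpa using this
    exact le_antisymm (ge_of_tendsto' htend0 hle) (zero_le)
  have hgood : ∀ᵐ t ∂μ, ∃ k, t ∉ F k := by
    filter_upwards [hA] with t ht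
    simpa [mem_iInter] using ht
  refine ⟨v, ?_, ?_, ?_⟩
  · -- measurability
    apply aemeasurable_of_tendsto_metrizable_ae atTop (fun i => hmeas (n i))
    filter_upwards [hgood] with t ht
    obtain ⟨k, hk⟩ := ht
    exact hvtendsto k t hk
  · -- selector
    have hallsel : ∀ᵐ t ∂μ, ∀ i, u (n i) t ∈ U t := ae_all_iff.2 fun i => hsel (n i)
    filter_upwards [hgood, hallsel] with t ht hsel'
    obtain ⟨k, hk⟩ := ht
    rw [hvk k t hk]
    exact hsel' k
  · -- convergence in the disagreement metric
    have : Tendsto (fun p => μ {t | u p t ≠ v t}) atTop (nhds 0) := by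
      rw [ENNReal.tendsto_atTop_zero]
      intro ε hε
      have hε2 : (0 : ℝ≥0∞) < ε / 2 := ENNReal.half_pos hε.ne'
      obtain ⟨N', hN'⟩ := hC (ε / 2) hε2
      have htend0 : Tendsto (fun k : ℕ => (2⁻¹ : ℝ≥0∞) ^ k * 2) atTop (nhds 0) := by
        have h1 : Tendsto (fun k : ℕ => (2⁻¹ : ℝ≥0∞) ^ k) atTop (nhds 0) :=
          ENNReal.tendsto_pow_atTop_nhds_zero_of_lt_one (by norm_num)
        have := ENNReal.Tendsto.mul_const h1 (Or.inr (by norm_num : (2 : ℝ≥0∞) ≠ ⊤))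
        simpa using this
      have hev : ∀ᶠ k : ℕ in atTop, (2⁻¹ : ℝ≥0∞) ^ k * 2 < ε / 2 :=
        htend0.eventually_lt_const hε2
      obtain ⟨k, hk1, hk2⟩ := (hev.and (eventually_ge_atTop N')).exists
      refine ⟨n k, fun p hp => ?_⟩
      have hsub : {t | u p t ≠ v t} ⊆ {t | u p t ≠ u (n k) t} ∪ F k := by
        intro t ht
        by_cases hFt : t ∈ F k
        · exact Or.inr hFt
        · left
          rw [Set.mem_setOf_eq, ← hvk k t hFt]
          exact ht
      calc μ {t | u p t ≠ v t} ≤ μ ({t | u p t ≠ u (n k) t} ∪ F k) := measure_mono hsub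
        _ ≤ μ {t | u p t ≠ u (n k) t} + μ (F k) := measure_union_le _ _
        _ ≤ ε / 2 + ε / 2 := by
            apply add_le_add
            · exact (hN' p (n k) (le_trans (le_trans hk2 (hn_strict.le_apply)) hp)
                (le_trans hk2 hn_strict.le_apply)).le
            · exact le_trans (hF k) hk1.le
        _ = ε := ENNReal.add_halves ε
    exact this.congr fun p => (hset (u p) v).symm
end
end
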